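/- The class of chordal graphs is closed under vertex contraction: if G is chordal and v ∈ V(G), then G/v is chordal. -/

import Mathlib

/-- A graph is chordal if every cycle of length at least 4 has a chord, i.e. an edge of the
graph joining two vertices of the cycle which is not an edge of the cycle. -/
def Chordal {V : Type*} (G : SimpleGraph V) : Prop :=
  ∀ (v : V) (p : G.Walk v v), p.IsCycle → 4 ≤ p.length →
    ∃ a b, a ∈ p.support ∧ b ∈ p.support ∧ G.Adj a b ∧ s(a, b) ∉ p.edges

/-- Contraction of a vertex `v`: remove `v` and make its neighborhood a clique. -/
def contractVert {V : Type*} (G : SimpleGraph V) (v : V) : SimpleGraph {u : V // u ≠ v} where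
  Adj a b := (a : V) ≠ (b : V) ∧ (G.Adj a b ∨ (G.Adj a v ∧ G.Adj v b))
  symm := by
    constructor
    rintro a b ⟨h1, h2 | ⟨h2, h3⟩⟩
    exacts [⟨h1.symm, Or.inl h2.symm⟩, ⟨h1.symm, Or.inr ⟨h3.symm, h2.symm⟩⟩]
  loopless := by constructor; rintro a ⟨h, -⟩; exact h rfl

open SimpleGraph Walk


namespace ChordalAux

variable {V : Type*} {G : SimpleGraph V}

lemma dropLast_support_nodup {u : V} {p : G.Walk u u} (hp : p.IsCycle) :
    p.support.dropLast.Nodup := by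
  have ht : p.support.tail.Nodup := hp.support_nodup
  have h3 := hp.three_le_length
  have hlt : p.support.tail.length = p.length := by
    rw [List.length_tail, p.length_support]; omega
  have htne : p.support.tail ≠ [] := by
    intro h; rw [h] at hlt; simp at hlt; omega
  have hlast : p.support.tail.getLast htne = u := by
    rw [List.getLast_tail]; exact p.getLast_support
  have hsplit := List.dropLast_append_getLast htne
  rw [hlast] at hsplit
  have ht' : (p.support.tail.dropLast ++ [u]).Nodup := by rw [hsplit]; exact ht
  rw [List.nodup_append] at ht'
  have hd : p.support.dropLast = u :: p.support.tail.dropLast := by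
    conv_lhs => rw [p.support_eq_cons]
    cases h : p.support.tail with
    | nil => exact absurd h htne
    | cons a l => simp
  rw [hd, List.nodup_cons]
  exact ⟨fun hu => ht'.2.2 u hu u (List.mem_singleton_self u) rfl, ht'.1⟩

lemma no_three_incident {u w : V} {p : G.Walk u u} (hp : p.IsCycle)
    {e1 e2 e3 : Sym2 V} (h1 : e1 ∈ p.edges) (h2 : e2 ∈ p.edges) (h3 : e3 ∈ p.edges)
    (hw1 : w ∈ e1) (hw2 : w ∈ e2) (hw3 : w ∈ e3)
    (d12 : e1 ≠ e2) (d13 : e1 ≠ e3) (d23 : e2 ≠ e3) : False := by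
  have hfst : (p.darts.map (fun d => d.fst)).Nodup := by
    rw [p.map_fst_darts]; exact dropLast_support_nodup hp
  have hsnd : (p.darts.map (fun d => d.snd)).Nodup := by
    rw [p.map_snd_darts]; exact hp.support_nodup
  have hmem : ∀ {e : Sym2 V}, e ∈ p.edges → ∃ d ∈ p.darts, d.edge = e := by
    intro e he
    rw [show p.edges = p.darts.map Dart.edge from rfl] at he
    exact List.mem_map.mp he
  have hpos : ∀ (d : G.Dart), w ∈ d.edge → d.fst = w ∨ d.snd = w := by
    rintro ⟨⟨a, b⟩, hd⟩ hw
    simpa [Dart.edge, Sym2.mem_iff, eq_comm] using hw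
  obtain ⟨q1, hq1, he1⟩ := hmem h1
  obtain ⟨q2, hq2, he2⟩ := hmem h2
  obtain ⟨q3, hq3, he3⟩ := hmem h3
  have injf := List.inj_on_of_nodup_map hfst
  have injs := List.inj_on_of_nodup_map hsnd
  have ff : ∀ {qa qb : G.Dart}, qa ∈ p.darts → qb ∈ p.darts → qa.fst = w → qb.fst = w →
      qa.edge = qb.edge := fun ha hb ca cb => by rw [injf ha hb (ca.trans cb.symm)]
  have ss : ∀ {qa qb : G.Dart}, qa ∈ p.darts → qb ∈ p.darts → qa.snd = w → qb.snd = w →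
      qa.edge = qb.edge := fun ha hb ca cb => by rw [injs ha hb (ca.trans cb.symm)]
  rcases hpos q1 (he1 ▸ hw1) with c1 | c1 <;>
  rcases hpos q2 (he2 ▸ hw2) with c2 | c2 <;>
  rcases hpos q3 (he3 ▸ hw3) with c3 | c3
  · exact d12 (by rw [← he1, ← he2]; exact ff hq1 hq2 c1 c2)
  · exact d12 (by rw [← he1, ← he2]; exact ff hq1 hq2 c1 c2)
  · exact d13 (by rw [← he1, ← he3]; exact ff hq1 hq3 c1 c3)
  · exact d23 (by rw [← he2, ← he3]; exact ss hq2 hq3 c2 c3)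
  · exact d23 (by rw [← he2, ← he3]; exact ff hq2 hq3 c2 c3)
  · exact d13 (by rw [← he1, ← he3]; exact ss hq1 hq3 c1 c3)
  · exact d12 (by rw [← he1, ← he2]; exact ss hq1 hq2 c1 c2)
  · exact d12 (by rw [← he1, ← he2]; exact ss hq1 hq2 c1 c2)

lemma exists_cross_edge {S : Set V} : ∀ {a b : V} (p : G.Walk a b), a ∈ S → b ∉ S →
    ∃ x y, s(x, y) ∈ p.edges ∧ x ∈ S ∧ y ∉ S := by
  intro a b p
  induction p with
  | nil => intro ha hb; exact absurd ha hb
  | @cons a c b hadj q ih =>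
    intro ha hb
    by_cases hc : c ∈ S
    · obtain ⟨x, y, he, hx, hy⟩ := ih hc hb
      exact ⟨x, y, by simp [he], hx, hy⟩
    · exact ⟨a, c, by simp, ha, hc⟩

lemma cycle_no_triangle {u a b c : V} {p : G.Walk u u} (hp : p.IsCycle) (hlen : 4 ≤ p.length)
    (hab : s(a, b) ∈ p.edges) (hbc : s(b, c) ∈ p.edges) (hac : s(a, c) ∈ p.edges) : False := by
  classical
  have hnab : a ≠ b := (p.adj_of_mem_edges hab).ne
  have hnbc : b ≠ c := (p.adj_of_mem_edges hbc).ne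
  have hnac : a ≠ c := (p.adj_of_mem_edges hac).ne
  have hnba := hnab.symm
  have hncb := hnbc.symm
  have hnca := hnac.symm
  have htnd := hp.support_nodup
  have hlt : p.support.tail.length = p.length := by
    rw [List.length_tail, p.length_support]; omega
  obtain ⟨z, hzmem, hz⟩ : ∃ z ∈ p.support.tail, ¬(z = a ∨ z = b ∨ z = c) := by
    by_contra hzz
    push_neg at hzz
    have hsub : p.support.tail ⊆ [a, b, c] := by
      intro x hx
      rcases hzz x hx with h | h | h <;> simp [h]
    have := (List.subperm_of_subset htnd hsub).length_le
    simp at this; omega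
  have hz' : z ∈ p.support := List.mem_of_mem_tail hzmem
  have hcross : ∃ x y, s(x, y) ∈ p.edges ∧ (x = a ∨ x = b ∨ x = c) ∧
      ¬(y = a ∨ y = b ∨ y = c) := by
    by_cases hu : u = a ∨ u = b ∨ u = c
    · obtain ⟨x, y, he, hx, hy⟩ :=
        exists_cross_edge (S := {x | x = a ∨ x = b ∨ x = c}) (p.takeUntil z hz') hu hz
      exact ⟨x, y, p.edges_takeUntil_subset hz' he, hx, hy⟩
    · have ha' : a ∈ p.support := p.fst_mem_support_of_mem_edges hab
      obtain ⟨x, y, he, hx, hy⟩ :=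
        exists_cross_edge (S := {x | x = a ∨ x = b ∨ x = c}) (p.dropUntil a ha')
          (Or.inl rfl) hu
      exact ⟨x, y, p.edges_dropUntil_subset ha' he, hx, hy⟩
  obtain ⟨x, y, he, hx, hy⟩ := hcross
  push_neg at hy
  obtain ⟨hy1, hy2, hy3⟩ := hy
  have hy1' := hy1.symm
  have hy2' := hy2.symm
  have hy3' := hy3.symm
  rcases hx with rfl | rfl | rfl
  · exact no_three_incident (w := x) hp hab hac he (by simp) (by simp) (by simp)
      (fun hq => by rcases Sym2.eq_iff.mp hq with ⟨e1, e2⟩ | ⟨e1, e2⟩ <;> simp_all)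
      (fun hq => by rcases Sym2.eq_iff.mp hq with ⟨e1, e2⟩ | ⟨e1, e2⟩ <;> simp_all)
      (fun hq => by rcases Sym2.eq_iff.mp hq with ⟨e1, e2⟩ | ⟨e1, e2⟩ <;> simp_all)
  · exact no_three_incident (w := x) hp hab hbc he (by simp) (by simp) (by simp)
      (fun hq => by rcases Sym2.eq_iff.mp hq with ⟨e1, e2⟩ | ⟨e1, e2⟩ <;> simp_all)
      (fun hq => by rcases Sym2.eq_iff.mp hq with ⟨e1, e2⟩ | ⟨e1, e2⟩ <;> simp_all)
      (fun hq => by rcases Sym2.eq_iff.mp hq with ⟨e1, e2⟩ | ⟨e1, e2⟩ <;> simp_all)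
  · exact no_three_incident (w := x) hp hbc hac he (by simp) (by simp) (by simp)
      (fun hq => by rcases Sym2.eq_iff.mp hq with ⟨e1, e2⟩ | ⟨e1, e2⟩ <;> simp_all)
      (fun hq => by rcases Sym2.eq_iff.mp hq with ⟨e1, e2⟩ | ⟨e1, e2⟩ <;> simp_all)
      (fun hq => by rcases Sym2.eq_iff.mp hq with ⟨e1, e2⟩ | ⟨e1, e2⟩ <;> simp_all)

section Contract

variable {v : V}

lemma walk_toG {a b : {u : V // u ≠ v}} (r : (contractVert G v).Walk a b)
    (hgood : ∀ x y : {u : V // u ≠ v}, s(x, y) ∈ r.edges → G.Adj x.val y.val) :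
    ∃ w : G.Walk a.val b.val, w.support = r.support.map Subtype.val ∧
      w.edges = r.edges.map (Sym2.map Subtype.val) ∧ w.length = r.length := by
  induction r with
  | nil => exact ⟨Walk.nil, by simp, by simp, by simp⟩
  | @cons a m b hadj q ih =>
    have h1 : G.Adj a.val m.val := hgood a m (by simp)
    obtain ⟨w, hs, he, hl⟩ := ih (fun x y hxy => hgood x y (by simp [hxy]))
    exact ⟨Walk.cons h1 w, by simp [hs], by simp [he], by simp [hl]⟩

lemma find_bad_decomp {a b : {u : V // u ≠ v}} (p : (contractVert G v).Walk a b)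
    (hex : ∃ x y : {u : V // u ≠ v}, s(x, y) ∈ p.edges ∧ ¬ G.Adj x.val y.val) :
    ∃ (x y : {u : V // u ≠ v}) (hxy : (contractVert G v).Adj x y)
      (r : (contractVert G v).Walk a x) (q : (contractVert G v).Walk y b),
      p = r.append (Walk.cons hxy q) ∧ ¬ G.Adj x.val y.val := by
  induction p with
  | nil => obtain ⟨x, y, hm, _⟩ := hex; simp at hm
  | @cons a m b hadj q ih =>
    obtain ⟨x, y, hm, hbad⟩ := hex
    by_cases hG : G.Adj a.val m.val
    · have hex' : ∃ x y : {u : V // u ≠ v}, s(x, y) ∈ q.edges ∧ ¬ G.Adj x.val y.val := by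
        refine ⟨x, y, ?_, hbad⟩
        simp only [Walk.edges_cons, List.mem_cons] at hm
        rcases hm with h | h
        · exfalso
          rcases Sym2.eq_iff.mp h with ⟨rfl, rfl⟩ | ⟨rfl, rfl⟩
          exacts [hbad hG, hbad hG.symm]
        · exact h
      obtain ⟨x', y', hxy, r, q', heq, hb⟩ := ih hex'
      exact ⟨x', y', hxy, Walk.cons hadj r, q', by simp [heq], hb⟩
    · exact ⟨a, m, hadj, Walk.nil, q, by simp, hG⟩

lemma shared_case {u : {u : V // u ≠ v}} {p : (contractVert G v).Walk u u}
    (hpc : p.IsCycle) (hlen : 4 ≤ p.length)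
    {w a b : {u : V // u ≠ v}} (hab : a ≠ b)
    (h0 : s(w, a) ∈ p.edges) (h1 : s(w, b) ∈ p.edges)
    (hav : G.Adj a.val v) (hbv : G.Adj v b.val) :
    ∃ A B, A ∈ p.support ∧ B ∈ p.support ∧ (contractVert G v).Adj A B ∧ s(A, B) ∉ p.edges := by
  refine ⟨a, b, p.snd_mem_support_of_mem_edges h0, p.snd_mem_support_of_mem_edges h1,
    ⟨fun hv => hab (Subtype.ext hv), Or.inr ⟨hav, hbv⟩⟩, fun hmem => ?_⟩
  exact cycle_no_triangle hpc hlen (Sym2.eq_swap ▸ h0) h1 hmem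

lemma disjoint_case {u : {u : V // u ≠ v}} {p : (contractVert G v).Walk u u}
    (hpc : p.IsCycle) (hlen : 4 ≤ p.length)
    {x0 y0 x1 y1 : {u : V // u ≠ v}}
    (h0 : s(x0, y0) ∈ p.edges) (h1 : s(x1, y1) ∈ p.edges)
    (nxx : x0 ≠ x1) (nxy : x0 ≠ y1) (nyx : y0 ≠ x1) (nyy : y0 ≠ y1)
    (hx0v : G.Adj x0.val v) (hx1v : G.Adj v x1.val) (hy1v : G.Adj v y1.val) :
    ∃ A B, A ∈ p.support ∧ B ∈ p.support ∧ (contractVert G v).Adj A B ∧ s(A, B) ∉ p.edges := by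
  have hxy1 : x1 ≠ y1 := fun h => (p.adj_of_mem_edges h1).1 (by rw [h])
  by_cases hA : s(x0, x1) ∈ p.edges
  · by_cases hB : s(x0, y1) ∈ p.edges
    · exfalso
      refine no_three_incident (w := x0) hpc h0 hA hB (by simp) (by simp) (by simp) ?_ ?_ ?_
      · exact fun hq => by
          rcases Sym2.eq_iff.mp hq with ⟨e1, e2⟩ | ⟨e1, e2⟩
          exacts [nyx e2, nxx e1]
      · exact fun hq => by
          rcases Sym2.eq_iff.mp hq with ⟨e1, e2⟩ | ⟨e1, e2⟩
          exacts [nyy e2, nxy e1]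
      · exact fun hq => by
          rcases Sym2.eq_iff.mp hq with ⟨e1, e2⟩ | ⟨e1, e2⟩
          exacts [hxy1 e2, nxy e1]
    · exact ⟨x0, y1, p.fst_mem_support_of_mem_edges h0, p.snd_mem_support_of_mem_edges h1,
        ⟨fun hv => nxy (Subtype.ext hv), Or.inr ⟨hx0v, hy1v⟩⟩, hB⟩
  · exact ⟨x0, x1, p.fst_mem_support_of_mem_edges h0, p.fst_mem_support_of_mem_edges h1,
      ⟨fun hv => nxx (Subtype.ext hv), Or.inr ⟨hx0v, hx1v⟩⟩, hA⟩

end Contract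

end ChordalAux

open ChordalAux in
/-- Chordal graphs are closed under vertex contraction. -/
theorem stmt3 {V : Type*} (G : SimpleGraph V) (v : V) (h : Chordal G) :
    Chordal (contractVert G v) := by
  classical
  intro u p hpc hlen
  have hinj : Function.Injective (Sym2.map (Subtype.val : {u : V // u ≠ v} → V)) :=
    Sym2.map.injective Subtype.val_injective
  by_cases hall : ∀ x y : {u : V // u ≠ v}, s(x, y) ∈ p.edges → G.Adj x.val y.val
  · -- all edges of the cycle are edges of G
    obtain ⟨w, hs, he, hl⟩ := walk_toG p hall
    have hwc : w.IsCycle := by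
      rw [Walk.isCycle_def]
      refine ⟨(Walk.isTrail_def _).mpr ?_, ?_, ?_⟩
      · rw [he]; exact (hpc.isCircuit.isTrail.edges_nodup).map hinj
      · intro hnil
        have h0 : w.length = 0 := by rw [hnil]; rfl
        rw [hl] at h0; omega
      · have ht : w.support.tail = p.support.tail.map Subtype.val := by
          rw [hs, p.support_eq_cons]; simp
        rw [ht]
        exact hpc.support_nodup.map Subtype.val_injective
    obtain ⟨A, B, hA, hB, hAB, hNE⟩ := h u.val w hwc (by rw [hl]; exact hlen)
    rw [hs] at hA hB
    obtain ⟨A', hA', rfl⟩ := List.mem_map.mp hA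
    obtain ⟨B', hB', rfl⟩ := List.mem_map.mp hB
    refine ⟨A', B', hA', hB', ⟨hAB.ne, Or.inl hAB⟩, fun hmem => hNE ?_⟩
    rw [he]
    exact List.mem_map.mpr ⟨_, hmem, by simp⟩
  · push_neg at hall
    obtain ⟨x0, y0, hm0, hb0⟩ := hall
    by_cases huniq : ∀ x y : {u : V // u ≠ v}, s(x, y) ∈ p.edges → ¬ G.Adj x.val y.val →
        s(x, y) = s(x0, y0)
    · -- exactly one bad edge: surgery through v
      obtain ⟨x, y, hxy, r, q, heq, hbad⟩ := find_bad_decomp p ⟨x0, y0, hm0, hb0⟩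
      subst heq
      obtain ⟨hxv, hvy⟩ : G.Adj x.val v ∧ G.Adj v y.val := by
        rcases hxy.2 with hG | hh; exacts [absurd hG hbad, hh]
      have hEdges : (r.append (Walk.cons hxy q)).edges = r.edges ++ s(x, y) :: q.edges := by
        rw [Walk.edges_append, Walk.edges_cons]
      have hSup : (r.append (Walk.cons hxy q)).support = r.support ++ q.support := by
        rw [Walk.support_append, Walk.support_cons]; rfl
      have hnodupE : (r.edges ++ s(x, y) :: q.edges).Nodup := by
        rw [← hEdges]; exact hpc.isCircuit.isTrail.edges_nodup
      have hmid := (List.nodup_middle.trans List.nodup_cons).mp hnodupE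
      have hxyp : s(x, y) ∈ (r.append (Walk.cons hxy q)).edges := by
        rw [hEdges]; exact List.mem_append_right _ (List.mem_cons_self)
      have hgoodr : ∀ a b : {u : V // u ≠ v}, s(a, b) ∈ r.edges → G.Adj a.val b.val := by
        intro a b hab
        by_contra hnot
        have hmm : s(a, b) ∈ (r.append (Walk.cons hxy q)).edges := by
          rw [hEdges]; exact List.mem_append_left _ hab
        have h1 := huniq a b hmm hnot
        have h2 := huniq x y hxyp hbad
        rw [← h2] at h1
        exact hmid.1 (List.mem_append_left _ (h1 ▸ hab))
      have hgoodq : ∀ a b : {u : V // u ≠ v}, s(a, b) ∈ q.edges → G.Adj a.val b.val := by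
        intro a b hab
        by_contra hnot
        have hmm : s(a, b) ∈ (r.append (Walk.cons hxy q)).edges := by
          rw [hEdges]; exact List.mem_append_right _ (List.mem_cons_of_mem _ hab)
        have h1 := huniq a b hmm hnot
        have h2 := huniq x y hxyp hbad
        rw [← h2] at h1
        exact hmid.1 (List.mem_append_right _ (h1 ▸ hab))
      obtain ⟨wr, hsr, her, hlr⟩ := walk_toG r hgoodr
      obtain ⟨wq, hsq, heq', hlq⟩ := walk_toG q hgoodq
      set c : G.Walk u.val u.val := wr.append (Walk.cons hxv (Walk.cons hvy wq)) with hc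
      have hvnotin : ∀ (l : List (Sym2 {u : V // u ≠ v})) (e : Sym2 V),
          e ∈ l.map (Sym2.map Subtype.val) → v ∉ e := by
        intro l e hel hv
        obtain ⟨e', _, rfl⟩ := List.mem_map.mp hel
        obtain ⟨a, _, ha⟩ := Sym2.mem_map.mp hv
        exact a.2 ha
      have hcE : c.edges = r.edges.map (Sym2.map Subtype.val) ++
          s(x.val, v) :: s(v, y.val) :: q.edges.map (Sym2.map Subtype.val) := by
        rw [hc, Walk.edges_append, Walk.edges_cons, Walk.edges_cons, her, heq']
      have hxvney : s(x.val, v) ≠ s(v, y.val) := by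
        intro hq
        rcases Sym2.eq_iff.mp hq with ⟨e1, _⟩ | ⟨e1, _⟩
        exacts [x.2 e1, hxy.1 e1]
      have hndE : c.edges.Nodup := by
        rw [hcE]
        have base : ((r.edges ++ q.edges).map (Sym2.map Subtype.val)).Nodup :=
          (hmid.2).map hinj
        rw [List.map_append] at base
        have h2 : (r.edges.map (Sym2.map Subtype.val) ++
            s(v, y.val) :: q.edges.map (Sym2.map Subtype.val)).Nodup := by
          rw [List.nodup_middle, List.nodup_cons]
          refine ⟨fun hmem => ?_, base⟩
          rcases List.mem_append.mp hmem with hh | hh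
          · exact hvnotin _ _ hh (Sym2.mem_iff.mpr (Or.inl rfl))
          · exact hvnotin _ _ hh (Sym2.mem_iff.mpr (Or.inl rfl))
        rw [List.nodup_middle, List.nodup_cons]
        refine ⟨fun hmem => ?_, h2⟩
        rcases List.mem_append.mp hmem with hh | hh
        · exact hvnotin _ _ hh (Sym2.mem_iff.mpr (Or.inr rfl))
        · rcases List.mem_cons.mp hh with hh' | hh'
          · exact hxvney hh'
          · exact hvnotin _ _ hh' (Sym2.mem_iff.mpr (Or.inr rfl))
      have hcS : c.support = r.support.map Subtype.val ++ v :: q.support.map Subtype.val := by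
        rw [hc, Walk.support_append, Walk.support_cons, Walk.support_cons, hsr, hsq]
        simp
      have hndS : c.support.tail.Nodup := by
        have hps : (r.append (Walk.cons hxy q)).support.tail =
            r.support.tail ++ q.support := by
          rw [hSup]
          conv_lhs => rw [r.support_eq_cons]
          simp
        have hnd : (r.support.tail ++ q.support).Nodup := by
          rw [← hps]; exact hpc.support_nodup
        have hndm := hnd.map Subtype.val_injective
        rw [List.map_append] at hndm
        have hct : c.support.tail =
            r.support.tail.map Subtype.val ++ v :: q.support.map Subtype.val := by
          conv_lhs => rw [hcS, r.support_eq_cons]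
          simp
          rw [List.tail_append_of_ne_nil (by cases r <;> simp)]
        rw [hct, List.nodup_middle, List.nodup_cons]
        refine ⟨fun hmem => ?_, hndm⟩
        rcases List.mem_append.mp hmem with hh | hh <;>
        · obtain ⟨a, _, ha⟩ := List.mem_map.mp hh
          exact a.2 ha
      have hclen : c.length = r.length + q.length + 2 := by
        rw [hc, Walk.length_append, Walk.length_cons, Walk.length_cons, hlr, hlq]
        omega
      have hplen : (r.append (Walk.cons hxy q)).length = r.length + q.length + 1 := by
        rw [Walk.length_append, Walk.length_cons]
        omega
      have hlen' : 4 ≤ r.length + q.length + 1 := by rw [← hplen]; exact hlen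
      have hcycle : c.IsCycle := by
        rw [Walk.isCycle_def]
        refine ⟨(Walk.isTrail_def _).mpr hndE, ?_, hndS⟩
        intro hnil
        have h0 : c.length = 0 := by rw [hnil]; rfl
        omega
      obtain ⟨A, B, hA, hB, hAB, hNE⟩ := h u.val c hcycle (by omega)
      rw [hcS] at hA hB
      have decode : ∀ C : V, C ≠ v →
          C ∈ r.support.map Subtype.val ++ v :: q.support.map Subtype.val →
          C ∈ (r.support ++ q.support).map Subtype.val := by
        intro C hCv hCmem
        rw [List.map_append]
        rcases List.mem_append.mp hCmem with hh | hh
        · exact List.mem_append_left _ hh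
        · rcases List.mem_cons.mp hh with hh' | hh'
          · exact absurd hh' hCv
          · exact List.mem_append_right _ hh'
      have key : ∀ C : V, G.Adj C v →
          C ∈ r.support.map Subtype.val ++ v :: q.support.map Subtype.val →
          s(C, v) ∉ c.edges → ∃ A B, A ∈ (r.append (Walk.cons hxy q)).support ∧
            B ∈ (r.append (Walk.cons hxy q)).support ∧ (contractVert G v).Adj A B ∧
            s(A, B) ∉ (r.append (Walk.cons hxy q)).edges := by
        intro C hCv hCmem hCne
        have hxsup : x ∈ (r.append (Walk.cons hxy q)).support :=
          Walk.fst_mem_support_of_mem_edges _ hxyp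
        have hysup : y ∈ (r.append (Walk.cons hxy q)).support :=
          Walk.snd_mem_support_of_mem_edges _ hxyp
        obtain ⟨C', hC'mem, rfl⟩ := List.mem_map.mp (decode C hCv.ne hCmem)
        rw [← hSup] at hC'mem
        have hCx : C' ≠ x := by
          rintro rfl
          apply hCne
          rw [hcE]
          exact List.mem_append_right _ (List.mem_cons_self)
        have hCy : C' ≠ y := by
          rintro rfl
          apply hCne
          rw [Sym2.eq_swap, hcE]
          exact List.mem_append_right _ (List.mem_cons_of_mem _ (List.mem_cons_self))
        by_cases hcx : s(C', x) ∈ (r.append (Walk.cons hxy q)).edges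
        · by_cases hcy : s(C', y) ∈ (r.append (Walk.cons hxy q)).edges
          · exact absurd (cycle_no_triangle hpc hlen hcx hxyp hcy) not_false
          · exact ⟨C', y, hC'mem, hysup,
              ⟨fun hvv => hCy (Subtype.ext hvv), Or.inr ⟨hCv, hvy⟩⟩, hcy⟩
        · exact ⟨C', x, hC'mem, hxsup,
            ⟨fun hvv => hCx (Subtype.ext hvv), Or.inr ⟨hCv, hxv.symm⟩⟩, hcx⟩
      by_cases hAv : A = v
      · subst hAv
        exact key B hAB.symm hB (fun hm => hNE (by rwa [Sym2.eq_swap] at hm))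
      · by_cases hBv : B = v
        · subst hBv
          exact key A hAB hA hNE
        · obtain ⟨A', hA'm, rfl⟩ := List.mem_map.mp (decode A hAv hA)
          obtain ⟨B', hB'm, rfl⟩ := List.mem_map.mp (decode B hBv hB)
          rw [← hSup] at hA'm hB'm
          refine ⟨A', B', hA'm, hB'm, ⟨hAB.ne, Or.inl hAB⟩, fun hmem => ?_⟩
          rw [hEdges] at hmem
          rcases List.mem_append.mp hmem with hh | hh
          · apply hNE
            rw [hcE]
            have hmm := List.mem_map_of_mem (f := Sym2.map Subtype.val) hh
            rw [Sym2.map_pair_eq] at hmm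
            exact List.mem_append_left _ hmm
          · rcases List.mem_cons.mp hh with hh' | hh'
            · rcases Sym2.eq_iff.mp hh' with ⟨rfl, rfl⟩ | ⟨rfl, rfl⟩
              exacts [hbad hAB, hbad hAB.symm]
            · apply hNE
              rw [hcE]
              have hmm := List.mem_map_of_mem (f := Sym2.map Subtype.val) hh'
              rw [Sym2.map_pair_eq] at hmm
              exact List.mem_append_right _
                (List.mem_cons_of_mem _ (List.mem_cons_of_mem _ hmm))
    · -- two distinct bad edges
      push_neg at huniq
      obtain ⟨x1, y1, hm1, hb1, hne01⟩ := huniq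
      have had0 := p.adj_of_mem_edges hm0
      have had1 := p.adj_of_mem_edges hm1
      obtain ⟨hx0v, hvy0⟩ : G.Adj x0.val v ∧ G.Adj v y0.val := by
        rcases had0.2 with hG | hh; exacts [absurd hG hb0, hh]
      obtain ⟨hx1v, hvy1⟩ : G.Adj x1.val v ∧ G.Adj v y1.val := by
        rcases had1.2 with hG | hh; exacts [absurd hG hb1, hh]
      by_cases e1 : x0 = x1
      · subst e1
        have hyy : y0 ≠ y1 := fun hh => hne01 (by rw [hh])
        exact shared_case hpc hlen hyy hm0 hm1 hvy0.symm hvy1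
      · by_cases e2 : x0 = y1
        · subst e2
          have hyx : y0 ≠ x1 := fun hh => hne01 (by rw [← hh, Sym2.eq_swap])
          exact shared_case hpc hlen hyx hm0 (by rwa [Sym2.eq_swap] at hm1)
            hvy0.symm hx1v.symm
        · by_cases e3 : y0 = x1
          · subst e3
            exact shared_case hpc hlen e2 (by rwa [Sym2.eq_swap] at hm0) hm1 hx0v hvy1
          · by_cases e4 : y0 = y1
            · subst e4
              exact shared_case hpc hlen e1 (by rwa [Sym2.eq_swap] at hm0)
                (by rwa [Sym2.eq_swap] at hm1) hx0v hx1v.symm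
            · exact disjoint_case hpc hlen hm0 hm1 e1 e2 e3 e4 hx0v hx1v.symm hvy1
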